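/- For every probability distribution P_XY on 𝒳×𝒴, lim_{θ→0} 2[H(X|Y) − H↓_{1+θ}(X|Y)]/θ = V(X|Y), i.e., the conditional varentropy V(X|Y) equals the limit of 2[H(X|Y) − H↓_{1+θ}(X|Y)]/θ as θ→0. -/

import Mathlib

open Real Filter

/-- Marginal distribution on `𝒴`. -/
noncomputable def margY {𝒳 𝒴 : Type*} [Fintype 𝒳] (P : 𝒳 × 𝒴 → ℝ) (y : 𝒴) : ℝ :=
  ∑ x : 𝒳, P (x, y)

/-- Lower conditional Rényi entropy `H↓_{1+θ}(X|Y)`. -/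
noncomputable def condRenyiDown {𝒳 𝒴 : Type*} [Fintype 𝒳] [Fintype 𝒴]
    (P : 𝒳 × 𝒴 → ℝ) (θ : ℝ) : ℝ :=
  -(1 / θ) * Real.log (∑ x : 𝒳, ∑ y : 𝒴,
    if 0 < P (x, y) then P (x, y) ^ (1 + θ) * margY P y ^ (-θ) else 0)

/-- Conditional entropy `H(X|Y)`. -/
noncomputable def condEnt {𝒳 𝒴 : Type*} [Fintype 𝒳] [Fintype 𝒴]
    (P : 𝒳 × 𝒴 → ℝ) : ℝ :=
  -∑ x : 𝒳, ∑ y : 𝒴,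
    if 0 < P (x, y) then P (x, y) * Real.log (P (x, y) / margY P y) else 0

/-- Conditional varentropy `V(X|Y)`. -/
noncomputable def condVarEnt {𝒳 𝒴 : Type*} [Fintype 𝒳] [Fintype 𝒴]
    (P : 𝒳 × 𝒴 → ℝ) : ℝ :=
  (∑ x : 𝒳, ∑ y : 𝒴,
    if 0 < P (x, y) then P (x, y) * (Real.log (P (x, y) / margY P y)) ^ 2 else 0)
  - (condEnt P) ^ 2

theorem lower_condRenyi_second_order {𝒳 𝒴 : Type*} [Fintype 𝒳] [Fintype 𝒴]
    (P : 𝒳 × 𝒴 → ℝ) (hP0 : ∀ p, 0 ≤ P p) (hP1 : ∑ p : 𝒳 × 𝒴, P p = 1) :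
    Tendsto (fun θ : ℝ => 2 * (condEnt P - condRenyiDown P θ) / θ)
      (nhdsWithin 0 (Set.Ioo (-1 : ℝ) 0 ∪ Set.Ioi 0)) (nhds (condVarEnt P)) := by
  classical
  set s : Finset (𝒳 × 𝒴) := Finset.univ.filter (fun p => 0 < P p) with hs
  set M : 𝒳 × 𝒴 → ℝ := fun p => ∑ x : 𝒳, P (x, p.2) with hM
  set L : 𝒳 × 𝒴 → ℝ := fun p => Real.log (P p / M p) with hL
  have hMpos : ∀ p ∈ s, 0 < M p := by
    intro p hp
    rw [hs, Finset.mem_filter] at hp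
    have h1 : P (p.1, p.2) ≤ M p :=
      Finset.single_le_sum (f := fun x => P (x, p.2)) (fun x _ => hP0 _) (Finset.mem_univ p.1)
    calc (0:ℝ) < P p := hp.2
    _ = P (p.1, p.2) := by rw [Prod.mk.eta]
    _ ≤ M p := h1
  have hsum : ∀ f : 𝒳 × 𝒴 → ℝ,
      (∑ x : 𝒳, ∑ y : 𝒴, if 0 < P (x, y) then f (x, y) else 0) = ∑ p ∈ s, f p := by
    intro f
    rw [← Finset.sum_product', hs, Finset.sum_filter, Finset.univ_product_univ]
  set S : ℝ → ℝ := fun θ => ∑ p ∈ s, P p * Real.exp (θ * L p) with hSdef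
  set S1 : ℝ → ℝ := fun θ => ∑ p ∈ s, P p * L p * Real.exp (θ * L p) with hS1def
  set S2 : ℝ → ℝ := fun θ => ∑ p ∈ s, P p * L p ^ 2 * Real.exp (θ * L p) with hS2def
  have hSderiv : ∀ θ, HasDerivAt S (S1 θ) θ := by
    intro θ
    apply HasDerivAt.fun_sum
    intro p hp
    have h : HasDerivAt (fun y => P p * Real.exp (y * L p)) (P p * (Real.exp (θ * L p) * (1 * L p))) θ :=
      (((hasDerivAt_id θ).mul_const (L p)).exp).const_mul (P p)
    refine h.congr_deriv ?_
    ring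
  have hS1deriv : ∀ θ, HasDerivAt S1 (S2 θ) θ := by
    intro θ
    apply HasDerivAt.fun_sum
    intro p hp
    have h : HasDerivAt (fun y => P p * L p * Real.exp (y * L p)) (P p * L p * (Real.exp (θ * L p) * (1 * L p))) θ :=
      (((hasDerivAt_id θ).mul_const (L p)).exp).const_mul (P p * L p)
    refine h.congr_deriv ?_
    ring
  have hsum_s : ∑ p ∈ s, P p = 1 := by
    rw [← hP1, hs, Finset.sum_filter]
    apply Finset.sum_congr rfl
    intro p _
    by_cases h : 0 < P p
    · simp [h]
    · simp [h, (le_antisymm (not_lt.mp h) (hP0 p)).symm]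
  have hsne : s.Nonempty := by
    by_contra h
    rw [Finset.not_nonempty_iff_eq_empty] at h
    rw [h, Finset.sum_empty] at hsum_s
    norm_num at hsum_s
  have hSpos : ∀ θ, 0 < S θ := by
    intro θ
    apply Finset.sum_pos _ hsne
    intro p hp
    rw [hs, Finset.mem_filter] at hp
    exact mul_pos hp.2 (Real.exp_pos _)
  have hS0 : S 0 = 1 := by
    rw [hSdef]
    simp only [zero_mul, Real.exp_zero, mul_one]
    exact hsum_s
  have hH : condEnt P = -S1 0 := by
    rw [condEnt, hsum (fun p => P p * Real.log (P p / margY P p.2))]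
    simp only [hS1def, zero_mul, Real.exp_zero, mul_one]
    rfl
  have hV : condVarEnt P = S2 0 - (condEnt P) ^ 2 := by
    rw [condVarEnt, hsum (fun p => P p * (Real.log (P p / margY P p.2)) ^ 2)]
    simp only [hS2def, zero_mul, Real.exp_zero, mul_one]
    rfl
  have hRD : ∀ θ, condRenyiDown P θ = -(1/θ) * Real.log (S θ) := by
    intro θ
    rw [condRenyiDown, hsum (fun p => P p ^ (1 + θ) * margY P p.2 ^ (-θ))]
    congr 2
    apply Finset.sum_congr rfl
    intro p hp
    have hp' : 0 < P p := (Finset.mem_filter.mp hp).2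
    have hm : 0 < M p := hMpos p hp
    have hm' : margY P p.2 = M p := rfl
    rw [hm', Real.rpow_add hp', Real.rpow_one, Real.rpow_neg hm.le,
      mul_assoc, ← div_eq_mul_inv, ← Real.div_rpow hp'.le hm.le,
      Real.rpow_def_of_pos (div_pos hp' hm)]
    simp [hL, mul_comm]
  -- F and its derivatives
  set F : ℝ → ℝ := fun θ => θ * condEnt P + Real.log (S θ) with hFdef
  set F' : ℝ → ℝ := fun θ => condEnt P + S1 θ / S θ with hF'def
  have hFderiv : ∀ θ, HasDerivAt F (F' θ) θ := by
    intro θ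
    exact (hasDerivAt_mul_const (condEnt P)).add ((hSderiv θ).log (hSpos θ).ne')
  have hF'0 : F' 0 = 0 := by
    rw [hF'def]
    simp only [hS0, div_one, hH]
    ring
  have hF0 : F 0 = 0 := by
    rw [hFdef]
    simp [hS0]
  have hF'deriv : HasDerivAt F' (condVarEnt P) 0 := by
    have h : HasDerivAt F' ((S2 0 * S 0 - S1 0 * S1 0) / S 0 ^ 2) 0 := (HasDerivAt.div (hS1deriv 0) (hSderiv 0) (hSpos 0).ne').const_add (condEnt P)
    convert h using 1
    rw [hV, hS0, hH]
    ring
  -- the main limit along the punctured neighborhood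
  have hslope : Tendsto (fun θ => F' θ / θ) (nhdsWithin 0 {(0:ℝ)}ᶜ) (nhds (condVarEnt P)) := by
    have h := hasDerivAt_iff_tendsto_slope.mp hF'deriv
    refine h.congr fun θ => ?_
    simp [slope_def_field, hF'0]
  have hmain : Tendsto (fun θ => 2 * F θ / θ ^ 2) (nhdsWithin 0 {(0:ℝ)}ᶜ)
      (nhds (condVarEnt P)) := by
    apply HasDerivAt.lhopital_zero_nhdsNE (f' := fun θ => 2 * F' θ) (g' := fun θ => 2 * θ)
    · exact Eventually.of_forall fun θ => (hFderiv θ).const_mul 2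
    · refine Eventually.of_forall fun θ => ?_
      have h := hasDerivAt_pow 2 θ
      norm_num at h
      exact h
    · filter_upwards [self_mem_nhdsWithin] with θ hθ
      exact mul_ne_zero two_ne_zero hθ
    · have : Tendsto (fun θ => 2 * F θ) (nhds 0) (nhds (2 * F 0)) :=
        (((hFderiv 0).continuousAt).tendsto.const_mul 2)
      rw [hF0, mul_zero] at this
      exact this.mono_left nhdsWithin_le_nhds
    · have : Tendsto (fun θ : ℝ => θ ^ 2) (nhds 0) (nhds ((0:ℝ) ^ 2)) :=
        (continuous_pow 2).tendsto 0
      norm_num at this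
      exact this.mono_left nhdsWithin_le_nhds
    · refine hslope.congr fun θ => ?_
      rw [mul_div_mul_left _ _ (two_ne_zero)]
  -- transfer to the stated filter and function
  have hsub : (Set.Ioo (-1 : ℝ) 0 ∪ Set.Ioi 0) ⊆ {(0:ℝ)}ᶜ := by
    rintro θ (hθ | hθ)
    · exact ne_of_lt hθ.2
    · exact ne_of_gt hθ
  have hle := nhdsWithin_mono (0:ℝ) hsub
  apply Tendsto.congr' _ (hmain.mono_left hle)
  filter_upwards [self_mem_nhdsWithin] with θ hθ
  have hθ0 : θ ≠ 0 := hsub hθ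
  rw [hRD θ, hFdef]
  field_simp
  ring
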